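/- Fix n, u, c, m : ℕ and e := u + c. Let N a : Matrix (Fin e) (Fin u) ℝ and C a : Matrix (Fin c) (Fin e) ℝ, for a ∈ Fin (n+1), be constant matrices satisfying (C a) * (N b) + (C b) * (N a) = 0 for all a, b, and let h : Matrix (Fin u) (Fin e) ℝ, hΓ : Matrix (Fin e) (Fin c) ℝ satisfy h * (N 0) = 1, (N 0) * h + hΓ * (C 0) = 1, and (C 0) * hΓ = 1. Let M a : Matrix (Fin m) (Fin c) ℝ satisfy M 0 = 0 and (M a) * (C 0) * (N b) + (M b) * (C 0) * (N a) = 0 for all a, b, and let NΔ : Matrix (Fin c) (Fin m) ℝ be arbitrary. Let φ : (Fin (n+1) → ℝ) → (Fin u → ℝ) be twice continuously differentiable, define E x := ∑ b, (N b).mulVec (∂_b φ x) and ψ x := (C 0).mulVec (E x), and assume φ is a solution of the evolution equations, i.e. h.mulVec (E x) = 0 for every x. Then the constraints satisfy the on-shell subsidiary system: for every x, ∂_0 ψ x + ∑ i ∈ Finset.univ \ {0}, ((C i) * hΓ + NΔ * (M i)).mulVec (∂_i ψ x) = 0. -/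

import Mathlib

open Matrix

/-- A double sum of an "antisymmetric" family vanishes. -/
lemma antisym_double_sum {ι V : Type*} [Fintype ι] [AddCommGroup V] [Module ℝ V]
    (g : ι → ι → V) (hg : ∀ a b, g a b + g b a = 0) :
    ∑ a, ∑ b, g a b = 0 := by
  have key : (∑ a, ∑ b, g a b) + (∑ a, ∑ b, g a b) = 0 := by
    nth_rewrite 2 [Finset.sum_comm]
    rw [← Finset.sum_add_distrib]
    simp only [← Finset.sum_add_distrib]
    calc (∑ a, ∑ b, (g a b + g b a)) = ∑ a : ι, ∑ b : ι, (0 : V) := by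
          refine Finset.sum_congr rfl fun a _ => Finset.sum_congr rfl fun b _ => hg a b
      _ = 0 := by simp
  have h2 : (2 : ℝ) • (∑ a, ∑ b, g a b) = 0 := by
    rw [two_smul]; exact key
  have := smul_eq_zero.mp h2
  simpa using this

/-- Constant-coefficient on-shell subsidiary system: along solutions of the evolution
equations, the constraints obey a first-order evolution equation, for any choice of the
free matrix `NΔ` contracted against the extra Geroch fields `M`. -/
theorem stmt_5 (n u c m : ℕ)
    (N : Fin (n + 1) → Matrix (Fin (u + c)) (Fin u) ℝ)
    (C : Fin (n + 1) → Matrix (Fin c) (Fin (u + c)) ℝ)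
    (hGeroch : ∀ a b, C a * N b + C b * N a = 0)
    (h : Matrix (Fin u) (Fin (u + c)) ℝ)
    (hΓ : Matrix (Fin (u + c)) (Fin c) ℝ)
    (hhN : h * N 0 = 1)
    (hinv : N 0 * h + hΓ * C 0 = 1)
    (hCh : C 0 * hΓ = 1)
    (M : Fin (n + 1) → Matrix (Fin m) (Fin c) ℝ)
    (hM0 : M 0 = 0)
    (hMsym : ∀ a b, M a * C 0 * N b + M b * C 0 * N a = 0)
    (NΔ : Matrix (Fin c) (Fin m) ℝ)
    (φ : (Fin (n + 1) → ℝ) → (Fin u → ℝ))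
    (hφ : ContDiff ℝ 2 φ)
    (E : (Fin (n + 1) → ℝ) → (Fin (u + c) → ℝ))
    (hE : ∀ x, E x = ∑ b, (N b).mulVec (fderiv ℝ φ x (Pi.single b 1)))
    (ψ : (Fin (n + 1) → ℝ) → (Fin c → ℝ))
    (hψ : ∀ x, ψ x = (C 0).mulVec (E x))
    (honshell : ∀ x, h.mulVec (E x) = 0) :
    ∀ x, fderiv ℝ ψ x (Pi.single 0 1)
        + ∑ i ∈ Finset.univ \ {0},
            (C i * hΓ + NΔ * M i).mulVec (fderiv ℝ ψ x (Pi.single i 1)) = 0 := by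
  intro x
  -- basic differentiability facts
  have hφ1 : ContDiff ℝ 1 (fderiv ℝ φ) := hφ.fderiv_right (by norm_num)
  have hd : Differentiable ℝ (fderiv ℝ φ) := hφ1.differentiable one_ne_zero
  set v : Fin (n + 1) → (Fin (n + 1) → ℝ) := fun a => Pi.single a 1 with hv
  -- second derivatives
  set D : Fin (n + 1) → Fin (n + 1) → (Fin u → ℝ) :=
    fun a b => fderiv ℝ (fderiv ℝ φ) x (v a) (v b) with hD
  have hDsymm : ∀ a b, D a b = D b a := fun a b =>
    (hφ.contDiffAt.isSymmSndFDerivAt (by norm_num)) (v a) (v b)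
  -- derivative of E
  set E' : (Fin (n + 1) → ℝ) →L[ℝ] (Fin (u + c) → ℝ) :=
    ∑ b, ((N b).mulVecLin.toContinuousLinearMap.comp
      ((ContinuousLinearMap.apply ℝ (Fin u → ℝ) (v b)).comp
        (fderiv ℝ (fderiv ℝ φ) x))) with hE'def
  have hEfun : E = fun y => ∑ b, (N b).mulVec (fderiv ℝ φ y (v b)) := funext hE
  have hE' : HasFDerivAt E E' x := by
    rw [hEfun, hE'def]
    apply HasFDerivAt.fun_sum
    intro b _
    exact ((N b).mulVecLin.toContinuousLinearMap.hasFDerivAt).comp x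
      (((ContinuousLinearMap.apply ℝ (Fin u → ℝ) (v b)).hasFDerivAt).comp x
        (hd x).hasFDerivAt)
  set V : Fin (n + 1) → (Fin (u + c) → ℝ) := fun a => E' (v a) with hVdef
  have hV : ∀ a, V a = ∑ b, (N b).mulVec (D a b) := by
    intro a
    simp [hVdef, hE'def, ContinuousLinearMap.sum_apply, hD]
  -- derivative of ψ
  have hψfun : ψ = fun y => (C 0).mulVecLin.toContinuousLinearMap (E y) := by
    funext y; simp [hψ y]
  have hψ' : HasFDerivAt ψ ((C 0).mulVecLin.toContinuousLinearMap.comp E') x := by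
    rw [hψfun]
    exact ((C 0).mulVecLin.toContinuousLinearMap.hasFDerivAt).comp x hE'
  have hψd : ∀ a, fderiv ℝ ψ x (v a) = (C 0).mulVec (V a) := by
    intro a
    rw [hψ'.fderiv]
    simp [hVdef]
  -- on-shell: h.mulVec (V a) = 0
  have hon : ∀ a, h.mulVec (V a) = 0 := by
    intro a
    have h1 : HasFDerivAt (fun y => h.mulVecLin.toContinuousLinearMap (E y))
        (h.mulVecLin.toContinuousLinearMap.comp E') x :=
      (h.mulVecLin.toContinuousLinearMap.hasFDerivAt).comp x hE'
    have h2 : (fun y => h.mulVecLin.toContinuousLinearMap (E y))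
        = fun _ => (0 : Fin u → ℝ) := by
      funext y; simp [honshell y]
    rw [h2] at h1
    have h3 : h.mulVecLin.toContinuousLinearMap.comp E' = 0 := by
      have := h1.fderiv
      rw [fderiv_fun_const] at this
      simpa using this.symm
    simpa [hVdef] using
      congrArg (fun (L : (Fin (n+1) → ℝ) →L[ℝ] (Fin u → ℝ)) => L (v a)) h3
  -- hΓ * C 0 acts as identity on the V a
  have hrec : ∀ a, hΓ.mulVec ((C 0).mulVec (V a)) = V a := by
    intro a
    have h1 : (N 0 * h + hΓ * C 0).mulVec (V a) = (1 : Matrix _ _ ℝ).mulVec (V a) := by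
      rw [hinv]
    rw [add_mulVec, one_mulVec, ← mulVec_mulVec, ← mulVec_mulVec, hon a,
      mulVec_zero, zero_add] at h1
    exact h1
  -- rewrite the goal in terms of V
  rw [hψd 0]
  have hterm : ∀ i, (C i * hΓ + NΔ * M i).mulVec (fderiv ℝ ψ x (v i))
      = (C i).mulVec (V i) + NΔ.mulVec ((M i * C 0).mulVec (V i)) := by
    intro i
    rw [hψd i, add_mulVec, ← mulVec_mulVec, ← mulVec_mulVec, hrec i,
      ← mulVec_mulVec, mulVec_mulVec]
  simp only [Finset.sdiff_singleton_eq_erase]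
  have key1 : (∑ a, (C a).mulVec (V a)) = 0 := by
    have heq : (∑ a, (C a).mulVec (V a))
        = ∑ a, ∑ b, (C a * N b).mulVec (D a b) := by
      refine Finset.sum_congr rfl fun a _ => ?_
      rw [hV a, ← Matrix.mulVecLin_apply, map_sum]
      simp [Matrix.mulVecLin_apply, mulVec_mulVec, Matrix.mul_assoc]
    rw [heq]
    apply antisym_double_sum
    intro a b
    rw [hDsymm b a, ← add_mulVec, hGeroch a b, zero_mulVec]
  have key2 : (∑ a, (M a * C 0).mulVec (V a)) = 0 := by
    have heq : (∑ a, (M a * C 0).mulVec (V a))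
        = ∑ a, ∑ b, (M a * C 0 * N b).mulVec (D a b) := by
      refine Finset.sum_congr rfl fun a _ => ?_
      rw [hV a, ← Matrix.mulVecLin_apply, map_sum]
      simp [Matrix.mulVecLin_apply, mulVec_mulVec, Matrix.mul_assoc]
    rw [heq]
    apply antisym_double_sum
    intro a b
    rw [hDsymm b a, ← add_mulVec, hMsym a b, zero_mulVec]
  have hsplit : (∑ i ∈ Finset.univ.erase 0,
        (C i * hΓ + NΔ * M i).mulVec (fderiv ℝ ψ x (v i)))
      = (∑ i ∈ Finset.univ.erase 0, (C i).mulVec (V i))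
        + ∑ i ∈ Finset.univ.erase 0, NΔ.mulVec ((M i * C 0).mulVec (V i)) := by
    rw [← Finset.sum_add_distrib]
    exact Finset.sum_congr rfl fun i _ => hterm i
  rw [hsplit, ← add_assoc,
    Finset.add_sum_erase Finset.univ (fun a => (C a).mulVec (V a)) (Finset.mem_univ 0),
    key1, zero_add]
  have hfull : (∑ i ∈ Finset.univ.erase 0, NΔ.mulVec ((M i * C 0).mulVec (V i)))
      = ∑ a, NΔ.mulVec ((M a * C 0).mulVec (V a)) := by
    rw [← Finset.add_sum_erase Finset.univ
      (fun a => NΔ.mulVec ((M a * C 0).mulVec (V a))) (Finset.mem_univ 0)]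
    simp [hM0]
  rw [hfull]
  have hpull : (∑ a, NΔ.mulVec ((M a * C 0).mulVec (V a)))
      = NΔ.mulVec (∑ a, (M a * C 0).mulVec (V a)) := by
    simp only [← Matrix.mulVecLin_apply]
    rw [← map_sum]
  rw [hpull, key2, mulVec_zero]
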